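/- arXiv:1504.00210 — 3 statements merged into one kernel-verified Lean document; each statement's English description precedes it below -/
import Mathlib

section
/- Let X' be a point such that {A, T'(D), X'}, {B, T'(E), X'}, and {C, T'(F), X'} are each collinear (X' is the perspector of the cevian triangle of P' and T⁻¹(ABC)). Then {A, T(D3), T(X')}, {B, T(E3), T(X')}, and {C, T(F3), T(X')} are each collinear; that is, T(X') is the perspector X of the cevian triangle of P and T'⁻¹(ABC). -/
open EuclideanGeometry Affine

local notation "Pt" => EuclideanSpace ℝ (Fin 2)

lemma coord_char (A B C : Pt) (h : ¬ Collinear ℝ ({A, B, C} : Set Pt)) :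
    ∃ x y : Pt →ₗ[ℝ] ℝ,
      x (B - A) = 1 ∧ y (B - A) = 0 ∧ x (C - A) = 0 ∧ y (C - A) = 1 ∧
      (∀ w : Pt, w = x w • (B - A) + y w • (C - A)) ∧
      (∀ X Y Z : Pt, Collinear ℝ ({X, Y, Z} : Set Pt) ↔
        x (Y - X) * y (Z - X) = x (Z - X) * y (Y - X)) := by
  have li : LinearIndependent ℝ ![B - A, C - A] := by
    rw [linearIndependent_fin2]
    simp only [Matrix.cons_val_one, Matrix.head_cons, Matrix.cons_val_zero]
    constructor
    · intro h0
      apply h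
      have hCA : C = A := by rwa [sub_eq_zero] at h0
      apply (collinear_iff_of_mem (Set.mem_insert A {B, C})).mpr
      refine ⟨B - A, fun p hp => ?_⟩
      simp only [Set.mem_insert_iff, Set.mem_singleton_iff] at hp
      rcases hp with rfl | rfl | rfl
      · exact ⟨0, by simp⟩
      · exact ⟨1, by simp [vadd_eq_add]⟩
      · exact ⟨0, by simp [hCA]⟩
    · intro a hBa
      apply h
      apply (collinear_iff_of_mem (Set.mem_insert A {B, C})).mpr
      refine ⟨C - A, fun p hp => ?_⟩
      simp only [Set.mem_insert_iff, Set.mem_singleton_iff] at hp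
      rcases hp with rfl | rfl | rfl
      · exact ⟨0, by simp⟩
      · exact ⟨a, by rw [vadd_eq_add, hBa]; abel⟩
      · exact ⟨1, by simp [vadd_eq_add]⟩
  have card_eq : Fintype.card (Fin 2) = Module.finrank ℝ Pt := by
    simp [finrank_euclideanSpace_fin]
  let bas := basisOfLinearIndependentOfCardEqFinrank li card_eq
  have hb : ⇑bas = ![B - A, C - A] := coe_basisOfLinearIndependentOfCardEqFinrank li card_eq
  have hb0 : bas 0 = B - A := by rw [hb]; rfl
  have hb1 : bas 1 = C - A := by rw [hb]; rfl
  have hexp : ∀ w : Pt, w = bas.coord 0 w • (B - A) + bas.coord 1 w • (C - A) := by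
    intro w
    have hs := bas.sum_repr w
    rw [Fin.sum_univ_two, hb0, hb1] at hs
    simp only [Module.Basis.coord_apply]
    exact hs.symm
  have hzero : ∀ w : Pt, bas.coord 0 w = 0 → bas.coord 1 w = 0 → w = 0 := by
    intro w h0 h1
    rw [hexp w, h0, h1]; simp
  refine ⟨bas.coord 0, bas.coord 1, ?_, ?_, ?_, ?_, hexp, ?_⟩
  · rw [← hb0]; simp
  · rw [← hb0]; simp [Module.Basis.coord_apply, Module.Basis.repr_self]
  · rw [← hb1]; simp [Module.Basis.coord_apply, Module.Basis.repr_self]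
  · rw [← hb1]; simp
  · intro X Y Z
    constructor
    · intro hcol
      obtain ⟨v, hv⟩ := (collinear_iff_of_mem (Set.mem_insert X {Y, Z})).mp hcol
      obtain ⟨rY, hY⟩ := hv Y (by simp)
      obtain ⟨rZ, hZ⟩ := hv Z (by simp)
      have hY' : Y - X = rY • v := by rw [hY, vadd_eq_add]; abel
      have hZ' : Z - X = rZ • v := by rw [hZ, vadd_eq_add]; abel
      rw [hY', hZ', map_smul, map_smul, map_smul, map_smul]
      simp only [smul_eq_mul]
      ring
    · intro hdet
      by_cases hY0 : Y - X = 0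
      · apply (collinear_iff_of_mem (Set.mem_insert X {Y, Z})).mpr
        have hYX : Y = X := by rwa [sub_eq_zero] at hY0
        refine ⟨Z - X, fun p hp => ?_⟩
        simp only [Set.mem_insert_iff, Set.mem_singleton_iff] at hp
        rcases hp with rfl | rfl | rfl
        · exact ⟨0, by simp⟩
        · exact ⟨0, by simp [hYX]⟩
        · exact ⟨1, by simp [vadd_eq_add]⟩
      · have hk : ∃ k : ℝ, Z - X = k • (Y - X) := by
          have key : ∃ k : ℝ, bas.coord 0 (Z - X) = k * bas.coord 0 (Y - X) ∧
              bas.coord 1 (Z - X) = k * bas.coord 1 (Y - X) := by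
            by_cases hs : bas.coord 0 (Y - X) = 0
            · have ht : bas.coord 1 (Y - X) ≠ 0 := fun ht => hY0 (hzero _ hs ht)
              refine ⟨bas.coord 1 (Z - X) / bas.coord 1 (Y - X), ?_, (div_mul_cancel₀ _ ht).symm⟩
              have hs' : bas.coord 0 (Z - X) = 0 := by
                rcases mul_eq_zero.mp (by rw [← hdet, hs]; ring :
                    bas.coord 0 (Z - X) * bas.coord 1 (Y - X) = 0) with h' | h'
                · exact h'
                · exact absurd h' ht
              rw [hs', hs]; ring
            · refine ⟨bas.coord 0 (Z - X) / bas.coord 0 (Y - X),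
                (div_mul_cancel₀ _ hs).symm, ?_⟩
              rw [div_mul_eq_mul_div, eq_div_iff hs]
              linear_combination hdet
          obtain ⟨k, hk0, hk1⟩ := key
          refine ⟨k, ?_⟩
          calc Z - X = (k * bas.coord 0 (Y - X)) • (B - A)
                + (k * bas.coord 1 (Y - X)) • (C - A) := by rw [← hk0, ← hk1]; exact hexp _
            _ = k • (Y - X) := by
                conv_rhs => rw [hexp (Y - X)]
                rw [smul_add, smul_smul, smul_smul]
        obtain ⟨k, hk⟩ := hk
        apply (collinear_iff_of_mem (Set.mem_insert X {Y, Z})).mpr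
        refine ⟨Y - X, fun p hp => ?_⟩
        simp only [Set.mem_insert_iff, Set.mem_singleton_iff] at hp
        rcases hp with rfl | rfl | rfl
        · exact ⟨0, by simp⟩
        · exact ⟨1, by simp [vadd_eq_add]⟩
        · exact ⟨k, by rw [vadd_eq_add, ← hk]; abel⟩

set_option maxHeartbeats 4000000 in
theorem stmt_16 (A B C G P D E F D0 E0 F0 D3 E3 F3 P' X' : Pt) (T T' : Pt →ᵃ[ℝ] Pt)
(hABC : AffineIndependent ℝ ![A, B, C])
    (hG : G = (1/3 : ℝ) • (A + B + C))
    (hPa : ¬ Collinear ℝ {B, C, P})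
    (hPb : ¬ Collinear ℝ {C, A, P})
    (hPc : ¬ Collinear ℝ {A, B, P})
    (hD : Collinear ℝ {B, C, D}) (hDcev : Collinear ℝ {A, P, D})
    (hE : Collinear ℝ {C, A, E}) (hEcev : Collinear ℝ {B, P, E})
    (hF : Collinear ℝ {A, B, F}) (hFcev : Collinear ℝ {C, P, F})
    (hD0 : D0 = midpoint ℝ B C) (hE0 : E0 = midpoint ℝ C A) (hF0 : F0 = midpoint ℝ A B)
(hD3 : D3 = Equiv.pointReflection D0 D)
    (hE3 : E3 = Equiv.pointReflection E0 E)
    (hF3 : F3 = Equiv.pointReflection F0 F)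
    (hP'a : Collinear ℝ {A, D3, P'})
    (hP'b : Collinear ℝ {B, E3, P'})
    (hP'c : Collinear ℝ {C, F3, P'})
    (hTA : T A = D) (hTB : T B = E) (hTC : T C = F)
    (hT'A : T' A = D3) (hT'B : T' B = E3) (hT'C : T' C = F3)
    (hX'a : Collinear ℝ {A, T' D, X'})
    (hX'b : Collinear ℝ {B, T' E, X'})
    (hX'c : Collinear ℝ {C, T' F, X'}) :
    Collinear ℝ {A, T D3, T X'} ∧ Collinear ℝ {B, T E3, T X'} ∧
      Collinear ℝ {C, T F3, T X'} := by
  have hncol : ¬ Collinear ℝ ({A, B, C} : Set Pt) :=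
    affineIndependent_iff_not_collinear_set.mp hABC
  obtain ⟨x, y, hxB, hyB, hxC, hyC, hexp, hcol⟩ := coord_char A B C hncol
  have hdf : ∀ f : Pt →ₗ[ℝ] ℝ, ∀ Q R : Pt, f (Q - R) = f (Q - A) - f (R - A) := by
    intro f Q R
    rw [show Q - R = (Q - A) - (R - A) by abel, map_sub]
  have hxA : x (A - A) = 0 := by rw [sub_self, map_zero]
  have hyA : y (A - A) = 0 := by rw [sub_self, map_zero]
  have col : ∀ X Y Z : Pt, Collinear ℝ ({X, Y, Z} : Set Pt) ↔
      (x (Y - A) - x (X - A)) * (y (Z - A) - y (X - A))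
        = (x (Z - A) - x (X - A)) * (y (Y - A) - y (X - A)) := by
    intro X Y Z
    rw [hcol X Y Z, hdf x Y X, hdf x Z X, hdf y Z X, hdf y Y X]
  -- midpoint and point reflection coordinates
  have hmid : ∀ (f : Pt →ₗ[ℝ] ℝ) (U V : Pt),
      f (midpoint ℝ U V - A) = (f (U - A) + f (V - A)) / 2 := by
    intro f U V
    rw [show midpoint ℝ U V - A = (1/2 : ℝ) • (U - A) + (1/2 : ℝ) • (V - A) by
      rw [midpoint_eq_smul_add, invOf_eq_inv]; module]
    rw [map_add, map_smul, map_smul]; simp only [smul_eq_mul]; ring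
  have hrefl : ∀ (f : Pt →ₗ[ℝ] ℝ) (U V : Pt),
      f ((Equiv.pointReflection U V : Pt) - A) = 2 * f (U - A) - f (V - A) := by
    intro f U V
    rw [Equiv.pointReflection_apply, vsub_eq_sub, vadd_eq_add,
      show U - V + U - A = (U - A) + (U - A) - (V - A) by abel, map_sub, map_add]
    ring
  -- affine map coordinates
  have haff : ∀ (f : Pt →ₗ[ℝ] ℝ) (S : Pt →ᵃ[ℝ] Pt) (Q : Pt),
      f (S Q - A) = f (S A - A) + x (Q - A) * (f (S B - A) - f (S A - A))
        + y (Q - A) * (f (S C - A) - f (S A - A)) := by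
    intro f S Q
    have h1 : S.linear (Q - A) = S Q - S A := by
      rw [← vsub_eq_sub Q A, AffineMap.linearMap_vsub, vsub_eq_sub]
    have h2 : S.linear (Q - A) = x (Q - A) • (S B - S A) + y (Q - A) • (S C - S A) := by
      conv_lhs => rw [hexp (Q - A)]
      rw [map_add, map_smul, map_smul, ← vsub_eq_sub B A, ← vsub_eq_sub C A,
        AffineMap.linearMap_vsub, AffineMap.linearMap_vsub, vsub_eq_sub, vsub_eq_sub]
    have h3 : S Q - A = x (Q - A) • (S B - S A) + y (Q - A) • (S C - S A) + (S A - A) := by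
      rw [← h2, h1]; abel
    rw [h3, map_add, map_add, map_smul, map_smul, hdf f (S B) (S A), hdf f (S C) (S A)]
    simp only [smul_eq_mul]; ring
  -- scalar coordinates
  set q := x (P - A) with hqdef
  set r := y (P - A) with hrdef
  set dx := x (D - A) with hdxdef
  set dy := y (D - A) with hdydef
  set ex := x (E - A) with hexdef
  set ey := y (E - A) with heydef
  set fx := x (F - A) with hfxdef
  set fy := y (F - A) with hfydef
  set u := x (X' - A) with hudef
  set v := y (X' - A) with hvdef
  clear_value q r dx dy ex ey fx fy u v
  -- nondegeneracy
  have hq0 : q ≠ 0 := by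
    intro h0
    apply hPb
    rw [col C A P, hxA, hyA, hxC, hyC, ← hqdef, ← hrdef, h0]; ring
  have hr0 : r ≠ 0 := by
    intro h0
    apply hPc
    rw [col A B P, hxA, hyA, hxB, hyB, ← hqdef, ← hrdef, h0]; ring
  have hp0 : 1 - q - r ≠ 0 := by
    intro h0
    apply hPa
    rw [col B C P, hxB, hyB, hxC, hyC, ← hqdef, ← hrdef]; linear_combination h0
  -- cevian feet
  have eD : dx + dy = 1 := by
    have hh := (col B C D).mp hD
    rw [hxB, hyB, hxC, hyC, ← hdxdef, ← hdydef] at hh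
    linarith
  have eDcev : q * dy = dx * r := by
    have hh := (col A P D).mp hDcev
    rw [hxA, hyA, ← hqdef, ← hrdef, ← hdxdef, ← hdydef] at hh
    linear_combination hh
  have hs1 : q + r ≠ 0 := by
    intro h0
    exact hq0 (by linear_combination eDcev + dx * h0 - q * eD)
  have hdxv : dx = q / (q + r) := by
    rw [eq_div_iff hs1]; linear_combination q * eD - eDcev
  have hdyv : dy = r / (q + r) := by
    rw [eq_div_iff hs1]; linear_combination r * eD + eDcev
  have hexv : ex = 0 := by
    have hh := (col C A E).mp hE
    rw [hxA, hyA, hxC, hyC, ← hexdef, ← heydef] at hh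
    linear_combination hh
  have eEcev : (q - 1) * ey = (ex - 1) * r := by
    have hh := (col B P E).mp hEcev
    rw [hxB, hyB, ← hqdef, ← hrdef, ← hexdef, ← heydef] at hh
    linear_combination hh
  have hs2 : 1 - q ≠ 0 := by
    intro h0
    exact hr0 (by linear_combination eEcev + r * hexv + ey * h0)
  have heyv : ey = r / (1 - q) := by
    rw [eq_div_iff hs2]; linear_combination -eEcev - r * hexv
  have hfyv : fy = 0 := by
    have hh := (col A B F).mp hF
    rw [hxA, hyA, hxB, hyB, ← hfxdef, ← hfydef] at hh
    linear_combination hh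
  have eFcev : q * (fy - 1) = fx * (r - 1) := by
    have hh := (col C P F).mp hFcev
    rw [hxC, hyC, ← hqdef, ← hrdef, ← hfxdef, ← hfydef] at hh
    linear_combination hh
  have hs3 : 1 - r ≠ 0 := by
    intro h0
    exact hq0 (by linear_combination -eFcev + q * hfyv + fx * h0)
  have hfxv : fx = q / (1 - r) := by
    rw [eq_div_iff hs3]; linear_combination eFcev - q * hfyv
  -- coordinates of D3 E3 F3
  have d3x : x (D3 - A) = 1 - dx := by
    rw [hD3, hD0, hrefl, hmid, hxB, hxC, ← hdxdef]; ring
  have d3y : y (D3 - A) = 1 - dy := by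
    rw [hD3, hD0, hrefl, hmid, hyB, hyC, ← hdydef]; ring
  have e3x : x (E3 - A) = -ex := by
    rw [hE3, hE0, hrefl, hmid, hxC, hxA, ← hexdef]; ring
  have e3y : y (E3 - A) = 1 - ey := by
    rw [hE3, hE0, hrefl, hmid, hyC, hyA, ← heydef]; ring
  have f3x : x (F3 - A) = 1 - fx := by
    rw [hF3, hF0, hrefl, hmid, hxA, hxB, ← hfxdef]; ring
  have f3y : y (F3 - A) = -fy := by
    rw [hF3, hF0, hrefl, hmid, hyA, hyB, ← hfydef]; ring
  -- coordinates of T' D and T' E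
  have tdx : x (T' D - A) = (1 - dx) + dx * (-ex - (1 - dx)) + dy * ((1 - fx) - (1 - dx)) := by
    have hh := haff x T' D
    rwa [hT'A, hT'B, hT'C, d3x, e3x, f3x, ← hdxdef, ← hdydef] at hh
  have tdy : y (T' D - A) = (1 - dy) + dx * ((1 - ey) - (1 - dy)) + dy * (-fy - (1 - dy)) := by
    have hh := haff y T' D
    rwa [hT'A, hT'B, hT'C, d3y, e3y, f3y, ← hdxdef, ← hdydef] at hh
  have tex : x (T' E - A) = (1 - dx) + ex * (-ex - (1 - dx)) + ey * ((1 - fx) - (1 - dx)) := by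
    have hh := haff x T' E
    rwa [hT'A, hT'B, hT'C, d3x, e3x, f3x, ← hexdef, ← heydef] at hh
  have tey : y (T' E - A) = (1 - dy) + ex * ((1 - ey) - (1 - dy)) + ey * (-fy - (1 - dy)) := by
    have hh := haff y T' E
    rwa [hT'A, hT'B, hT'C, d3y, e3y, f3y, ← hexdef, ← heydef] at hh
  -- the two perspector conditions
  have P1 : x (T' D - A) * v = u * y (T' D - A) := by
    have hh := (col A (T' D) X').mp hX'a
    rw [hxA, hyA, ← hudef, ← hvdef] at hh
    linear_combination hh
  have P2 : (x (T' E - A) - 1) * v = (u - 1) * y (T' E - A) := by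
    have hh := (col B (T' E) X').mp hX'b
    rw [hxB, hyB, ← hudef, ← hvdef] at hh
    linear_combination hh
  -- explicit coordinates of T' D and T' E
  have vdx : x (T' D - A) = r*(1-q-r) / ((q+r)*(1-r)) := by
    rw [tdx]
    simp only [hdxv, hdyv, hexv, heyv, hfxv, hfyv]
    field_simp
    ring
  have vdy : y (T' D - A) = q*(1-q-r) / ((q+r)*(1-q)) := by
    rw [tdy]
    simp only [hdxv, hdyv, hexv, heyv, hfxv, hfyv]
    field_simp
    ring
  have vex : x (T' E - A) = r*((1-r) - q*(q+r)) / ((q+r)*((1-q)*(1-r))) := by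
    rw [tex]
    simp only [hdxv, hdyv, hexv, heyv, hfxv, hfyv]
    field_simp
    ring
  have vey : y (T' E - A) = q*(1-q-r) / ((q+r)*(1-q)) := by
    rw [tey]
    simp only [hdxv, hdyv, hexv, heyv, hfxv, hfyv]
    field_simp
    ring
  -- polynomial forms of the X' conditions
  have Q1 : r*(1-q)*v = q*(1-r)*u := by
    have h3 : (1-q-r)*(r*(1-q)*v) = (1-q-r)*(q*(1-r)*u) := by
      calc (1-q-r)*(r*(1-q)*v)
          = ((q+r)*((1-q)*(1-r))) * (x (T' D - A) * v) := by
            rw [vdx]; field_simp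
        _ = ((q+r)*((1-q)*(1-r))) * (u * y (T' D - A)) := by rw [P1]
        _ = (1-q-r)*(q*(1-r)*u) := by rw [vdy]; field_simp
    exact mul_left_cancel₀ hp0 h3
  have Q2 : (r*(1-r) - q*r*(q+r) - (q+r)*((1-q)*(1-r)))*v
      = (u-1)*(q*(1-q-r)*(1-r)) := by
    calc (r*(1-r) - q*r*(q+r) - (q+r)*((1-q)*(1-r)))*v
        = ((q+r)*((1-q)*(1-r))) * ((x (T' E - A) - 1) * v) := by
          rw [vex]; field_simp
          try ring
          try tauto
      _ = ((q+r)*((1-q)*(1-r))) * ((u - 1) * y (T' E - A)) := by rw [P2]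
      _ = (u-1)*(q*(1-q-r)*(1-r)) := by rw [vey]; field_simp
  -- solve for u and v
  have h5 : q*(1-r)*((q*r*(q+r) + (1-q-r)*r*(1-q) + (1-q-r)*q*(1-r))*u
      - (1-q-r)*r*(1-q)) = 0 := by
    linear_combination (-q + 2*q*r - 2*q*r^2 + q^2 - 2*q^2*r)*Q1 - (r*(1-q))*Q2
  have h4 : q*(1-r)*((q*r*(q+r) + (1-q-r)*r*(1-q) + (1-q-r)*q*(1-r))*v
      - (1-q-r)*q*(1-r)) = 0 := by
    linear_combination (q*(1-r)*(1-q-r))*Q1 - (q*(1-r))*Q2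
  have hq3 : q*(1-r) ≠ 0 := mul_ne_zero hq0 hs3
  have huW : (q*r*(q+r) + (1-q-r)*r*(1-q) + (1-q-r)*q*(1-r))*u
      - (1-q-r)*r*(1-q) = 0 := (mul_eq_zero.mp h5).resolve_left hq3
  have hvW : (q*r*(q+r) + (1-q-r)*r*(1-q) + (1-q-r)*q*(1-r))*v
      - (1-q-r)*q*(1-r) = 0 := (mul_eq_zero.mp h4).resolve_left hq3
  have hW : (q*r*(q+r) + (1-q-r)*r*(1-q) + (1-q-r)*q*(1-r)) ≠ 0 := by
    intro h0
    have hz : (1-q-r)*r*(1-q) = 0 := by linear_combination -huW + u*h0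
    exact (mul_ne_zero (mul_ne_zero hp0 hr0) hs2) hz
  have hW' : r * (q * (q + r) + (1 - q) * (1 - q - r)) + q * (1 - q - r) * (1 - r) ≠ 0 := by
    intro h0; exact hW (by linear_combination h0)
  have hW'' : r * (q * (q + r) + (1 - q) * (1 - q - r)) + q * (1 - r) * (1 - q - r) ≠ 0 := by
    intro h0; exact hW (by linear_combination h0)
  have hu : u = (1-q-r)*r*(1-q) / (q*r*(q+r) + (1-q-r)*r*(1-q) + (1-q-r)*q*(1-r)) := by
    rw [eq_div_iff hW]; linear_combination huW
  have hv : v = (1-q-r)*q*(1-r) / (q*r*(q+r) + (1-q-r)*r*(1-q) + (1-q-r)*q*(1-r)) := by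
    rw [eq_div_iff hW]; linear_combination hvW
  -- coordinates of the image points under T
  have g1x : x (T D3 - A) = dx + (1-dx)*(ex - dx) + (1-dy)*(fx - dx) := by
    have hh := haff x T D3
    rwa [hTA, hTB, hTC, d3x, d3y, ← hdxdef, ← hexdef, ← hfxdef] at hh
  have g1y : y (T D3 - A) = dy + (1-dx)*(ey - dy) + (1-dy)*(fy - dy) := by
    have hh := haff y T D3
    rwa [hTA, hTB, hTC, d3x, d3y, ← hdydef, ← heydef, ← hfydef] at hh
  have g2x : x (T E3 - A) = dx + (-ex)*(ex - dx) + (1-ey)*(fx - dx) := by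
    have hh := haff x T E3
    rwa [hTA, hTB, hTC, e3x, e3y, ← hdxdef, ← hexdef, ← hfxdef] at hh
  have g2y : y (T E3 - A) = dy + (-ex)*(ey - dy) + (1-ey)*(fy - dy) := by
    have hh := haff y T E3
    rwa [hTA, hTB, hTC, e3x, e3y, ← hdydef, ← heydef, ← hfydef] at hh
  have g3x : x (T F3 - A) = dx + (1-fx)*(ex - dx) + (-fy)*(fx - dx) := by
    have hh := haff x T F3
    rwa [hTA, hTB, hTC, f3x, f3y, ← hdxdef, ← hexdef, ← hfxdef] at hh
  have g3y : y (T F3 - A) = dy + (1-fx)*(ey - dy) + (-fy)*(fy - dy) := by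
    have hh := haff y T F3
    rwa [hTA, hTB, hTC, f3x, f3y, ← hdydef, ← heydef, ← hfydef] at hh
  have gXx : x (T X' - A) = dx + u*(ex - dx) + v*(fx - dx) := by
    have hh := haff x T X'
    rwa [hTA, hTB, hTC, ← hudef, ← hvdef, ← hdxdef, ← hexdef, ← hfxdef] at hh
  have gXy : y (T X' - A) = dy + u*(ey - dy) + v*(fy - dy) := by
    have hh := haff y T X'
    rwa [hTA, hTB, hTC, ← hudef, ← hvdef, ← hdydef, ← heydef, ← hfydef] at hh
  -- explicit rational values of all image coordinates
  have w1x : x (T D3 - A) = q^2/((q+r)*(1-r)) := by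
    rw [g1x]; simp only [hdxv, hdyv, hexv, heyv, hfxv, hfyv]; field_simp; ring
  have w1y : y (T D3 - A) = r^2/((q+r)*(1-q)) := by
    rw [g1y]; simp only [hdxv, hdyv, hexv, heyv, hfxv, hfyv]; field_simp; ring
  have w2x : x (T E3 - A) = q*(q + 2*r - q^2 - 2*q*r - 2*r^2)/((q+r)*((1-q)*(1-r))) := by
    rw [g2x]; simp only [hdxv, hdyv, hexv, heyv, hfxv, hfyv]; field_simp; ring
  have w2y : y (T E3 - A) = r^2/((q+r)*(1-q)) := by
    rw [g2y]; simp only [hdxv, hdyv, hexv, heyv, hfxv, hfyv]; field_simp; ring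
  have w3x : x (T F3 - A) = q^2/((q+r)*(1-r)) := by
    rw [g3x]; simp only [hdxv, hdyv, hexv, heyv, hfxv, hfyv]; field_simp; ring
  have w3y : y (T F3 - A) = r*(2*q + r - 2*q^2 - 2*q*r - r^2)/((q+r)*((1-q)*(1-r))) := by
    rw [g3y]; simp only [hdxv, hdyv, hexv, heyv, hfxv, hfyv]; field_simp; ring
  have wXx : x (T X' - A)
      = q^2*(1-q)/(q*r*(q+r) + (1-q-r)*r*(1-q) + (1-q-r)*q*(1-r)) := by
    rw [gXx]; simp only [hdxv, hdyv, hexv, heyv, hfxv, hfyv, hu, hv]; field_simp; ring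
  have wXy : y (T X' - A)
      = r^2*(1-r)/(q*r*(q+r) + (1-q-r)*r*(1-q) + (1-q-r)*q*(1-r)) := by
    rw [gXy]; simp only [hdxv, hdyv, hexv, heyv, hfxv, hfyv, hu, hv]; field_simp; ring
  refine ⟨?_, ?_, ?_⟩
  · rw [col A (T D3) (T X'), hxA, hyA, w1x, w1y, wXx, wXy]
    field_simp
    ring
  · rw [col B (T E3) (T X'), hxB, hyB, w2x, w2y, wXx, wXy]
    field_simp
    ring
  · rw [col C (T F3) (T X'), hxC, hyC, w3x, w3y, wXx, wXy]
    field_simp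
    ring
end

section
/- Assume A', B', C' are affinely independent, and that {A', Q, A}, {B', Q, B}, {C', Q, C} are each collinear (so ABC is the cevian triangle of Q with respect to A'B'C'). Let A* be the reflection of A in the midpoint of B'C', B* the reflection of B in the midpoint of A'C', C* the reflection of C in the midpoint of A'B', and let Q* be a point with {A', A*, Q*}, {B', B*, Q*}, {C', C*, Q*} each collinear (the isotomic conjugate of Q with respect to A'B'C'). Let G* be the centroid of A', B', C'. Then K(P) equals the image of Q* under the homothety with center G* and ratio -1/2; that is, Q' = K(P) is the isotomcomplement of Q with respect to the anticevian triangle A'B'C' of Q. -/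
open EuclideanGeometry Affine

local notation "Pt" => EuclideanSpace ℝ (Fin 2)

lemma my_coords_unique {b c : Pt} (hbc : LinearIndependent ℝ ![b, c])
    {A : Pt} {x1 x2 y1 y2 : ℝ} (h : x1•b + x2•c + A = y1•b + y2•c + A) :
    x1 = y1 ∧ x2 = y2 := by
  have h0 : (x1 - y1) • b + (x2 - y2) • c = 0 := by
    rw [sub_smul, sub_smul]
    linear_combination (norm := module) h
  have := Fintype.linearIndependent_iff.mp hbc ![x1 - y1, x2 - y2] (by
    simpa [Fin.sum_univ_two] using h0)
  have h1 := this 0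
  have h2 := this 1
  simp at h1 h2
  constructor <;> linarith [h1, h2]

lemma my_exists_coords {b c : Pt} (hbc : LinearIndependent ℝ ![b, c]) (A X : Pt) :
    ∃ x1 x2 : ℝ, X = x1•b + x2•c + A := by
  have hcard : Fintype.card (Fin 2) = Module.finrank ℝ Pt := by
    simp [finrank_euclideanSpace]
  let ℬ : Module.Basis (Fin 2) ℝ Pt := basisOfLinearIndependentOfCardEqFinrank hbc hcard
  have hrepr := ℬ.sum_repr (X - A)
  rw [Fin.sum_univ_two] at hrepr
  have hb0 : ℬ 0 = b := by
    simp [ℬ, coe_basisOfLinearIndependentOfCardEqFinrank]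
  have hb1 : ℬ 1 = c := by
    simp [ℬ, coe_basisOfLinearIndependentOfCardEqFinrank]
  refine ⟨ℬ.repr (X - A) 0, ℬ.repr (X - A) 1, ?_⟩
  rw [hb0, hb1] at hrepr
  rw [hrepr]
  abel

lemma my_collinear_iff_det {b c : Pt} (hbc : LinearIndependent ℝ ![b, c]) (A : Pt)
    {X Y Z : Pt} {x1 x2 y1 y2 z1 z2 : ℝ}
    (hX : X = x1•b + x2•c + A) (hY : Y = y1•b + y2•c + A) (hZ : Z = z1•b + z2•c + A) :
    Collinear ℝ ({X, Y, Z} : Set Pt) ↔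
      (y1 - x1) * (z2 - x2) - (y2 - x2) * (z1 - x1) = 0 := by
  have hYc : Y - X = (y1-x1) • b + (y2-x2) • c := by rw [hX, hY]; module
  have hZc : Z - X = (z1-x1) • b + (z2-x2) • c := by rw [hX, hZ]; module
  constructor
  · intro h
    rw [collinear_iff_of_mem (Set.mem_insert X {Y, Z})] at h
    obtain ⟨v, hv⟩ := h
    obtain ⟨rX, hrX⟩ := hv X (by simp)
    obtain ⟨rY, hrY⟩ := hv Y (by simp)
    obtain ⟨rZ, hrZ⟩ := hv Z (by simp)
    have hYX : Y - X = (rY - rX) • v := by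
      rw [hrX, hrY]; simp only [vadd_eq_add]; module
    have hZX : Z - X = (rZ - rX) • v := by
      rw [hrX, hrZ]; simp only [vadd_eq_add]; module
    have key : (rZ - rX) • (Y - X) = (rY - rX) • (Z - X) := by
      rw [hYX, hZX, smul_comm]
    rw [hYc, hZc] at key
    have key2 : ((rZ - rX) * (y1 - x1)) • b + ((rZ - rX) * (y2 - x2)) • c + A
        = ((rY - rX) * (z1 - x1)) • b + ((rY - rX) * (z2 - x2)) • c + A := by
      linear_combination (norm := module) key
    obtain ⟨e1, e2⟩ := my_coords_unique hbc key2
    by_cases hry : rY - rX = 0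
    · have h0 : Y - X = 0 := by rw [hYX, hry, zero_smul]
      rw [hYc] at h0
      have h0' : (y1-x1) • b + (y2-x2) • c + A = (0:ℝ) • b + (0:ℝ) • c + A := by
        rw [h0]; simp
      obtain ⟨f1, f2⟩ := my_coords_unique hbc h0'
      rw [f1, f2]; ring
    · have hz1 : z1 - x1 = ((rZ - rX) / (rY - rX)) * (y1 - x1) := by
        field_simp
        linear_combination -e1
      have hz2 : z2 - x2 = ((rZ - rX) / (rY - rX)) * (y2 - x2) := by
        field_simp
        linear_combination -e2
      rw [hz1, hz2]; ring
  · intro hdet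
    rw [collinear_iff_of_mem (Set.mem_insert X {Y, Z})]
    by_cases hy1 : y1 - x1 = 0
    · by_cases hy2 : y2 - x2 = 0
      · refine ⟨Z - X, fun pp hp => ?_⟩
        simp only [Set.mem_insert_iff, Set.mem_singleton_iff] at hp
        have hYX : Y = X := by
          have h0 : Y - X = 0 := by rw [hYc, hy1, hy2]; simp
          exact sub_eq_zero.mp h0
        rcases hp with h | h | h
        · exact ⟨0, by rw [h]; simp⟩
        · exact ⟨0, by rw [h, hYX]; simp⟩
        · exact ⟨1, by rw [h]; simp⟩
      · have hz1 : z1 - x1 = 0 := by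
          have h0 : (y2-x2)*(z1-x1) = 0 := by
            linear_combination (z2-x2)*hy1 - hdet
          exact (mul_eq_zero.mp h0).resolve_left hy2
        refine ⟨Y - X, fun pp hp => ?_⟩
        simp only [Set.mem_insert_iff, Set.mem_singleton_iff] at hp
        rcases hp with h | h | h
        · exact ⟨0, by rw [h]; simp⟩
        · exact ⟨1, by rw [h]; simp⟩
        · refine ⟨(z2-x2)/(y2-x2), ?_⟩
          rw [h]
          have hsub : Z - X = ((z2-x2)/(y2-x2)) • (Y - X) := by
            rw [hYc, hZc, hz1, hy1]
            rw [smul_add, smul_smul, smul_smul]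
            rw [div_mul_cancel₀ _ hy2]
            simp
          have := sub_eq_iff_eq_add.mp hsub
          simpa using this
    · refine ⟨Y - X, fun pp hp => ?_⟩
      simp only [Set.mem_insert_iff, Set.mem_singleton_iff] at hp
      rcases hp with h | h | h
      · exact ⟨0, by rw [h]; simp⟩
      · exact ⟨1, by rw [h]; simp⟩
      · refine ⟨(z1-x1)/(y1-x1), ?_⟩
        rw [h]
        have hz2 : z2 - x2 = ((z1-x1)/(y1-x1)) * (y2 - x2) := by
          field_simp
          linear_combination hdet
        have hsub : Z - X = ((z1-x1)/(y1-x1)) • (Y - X) := by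
          rw [hYc, hZc]
          rw [smul_add, smul_smul, smul_smul]
          rw [div_mul_cancel₀ _ hy1, ← hz2]
        have := sub_eq_iff_eq_add.mp hsub
        simpa using this

lemma my_para_det {b c : Pt} (hbc : LinearIndependent ℝ ![b, c]) (A : Pt)
    {X Y Z W : Pt} {x1 x2 y1 y2 z1 z2 w1 w2 : ℝ}
    (hX : X = x1•b + x2•c + A) (hY : Y = y1•b + y2•c + A)
    (hZ : Z = z1•b + z2•c + A) (hW : W = w1•b + w2•c + A)
    (h : line[ℝ, X, Y] ∥ line[ℝ, Z, W]) :
    (y1 - x1) * (w2 - z2) - (y2 - x2) * (w1 - z1) = 0 := by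
  have hdir := h.direction_eq
  rw [direction_affineSpan, direction_affineSpan] at hdir
  have hmem : Y -ᵥ X ∈ vectorSpan ℝ ({X, Y} : Set Pt) :=
    vsub_mem_vectorSpan ℝ (by simp) (by simp)
  rw [hdir, vectorSpan_pair] at hmem
  obtain ⟨t, ht⟩ := Submodule.mem_span_singleton.mp hmem
  have ht' : Y - X = t • (Z - W) := by
    simpa [vsub_eq_sub] using ht.symm
  rw [hX, hY, hZ, hW] at ht'
  have key : (y1 - x1) • b + (y2 - x2) • c + A
      = (t * (z1 - w1)) • b + (t * (z2 - w2)) • c + A := by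
    linear_combination (norm := module) ht'
  obtain ⟨e1, e2⟩ := my_coords_unique hbc key
  rw [e1, e2]; ring

lemma my_bc_indep {A B C : Pt} (h : AffineIndependent ℝ ![A, B, C]) :
    LinearIndependent ℝ ![B - A, C - A] := by
  have hncol : ¬ Collinear ℝ ({A, B, C} : Set Pt) :=
    affineIndependent_iff_not_collinear_set.mp h
  rw [linearIndependent_fin2]
  simp only [Matrix.cons_val_one, Matrix.head_cons, Matrix.cons_val_zero]
  constructor
  · intro hc
    apply hncol
    have hCA : C = A := by rwa [sub_eq_zero] at hc
    rw [collinear_iff_of_mem (Set.mem_insert A {B, C})]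
    refine ⟨B - A, fun p hp => ?_⟩
    simp only [Set.mem_insert_iff, Set.mem_singleton_iff] at hp
    rcases hp with h' | h' | h'
    · exact ⟨0, by rw [h']; simp⟩
    · exact ⟨1, by rw [h']; simp⟩
    · exact ⟨0, by rw [h', hCA]; simp⟩
  · intro a hc
    apply hncol
    rw [collinear_iff_of_mem (Set.mem_insert A {B, C})]
    refine ⟨C - A, fun p hp => ?_⟩
    simp only [Set.mem_insert_iff, Set.mem_singleton_iff] at hp
    rcases hp with h' | h' | h'
    · exact ⟨0, by rw [h']; simp⟩
    · refine ⟨a, ?_⟩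
      rw [h']
      simp only [vadd_eq_add, hc]
      abel
    · exact ⟨1, by rw [h']; simp⟩

lemma my_solve2 {a b c d e f X Y cx cy : ℝ} (h1 : a*X + b*Y = e) (h2 : c*X + d*Y = f)
    (hΔ : a*d - b*c ≠ 0) (hc1 : a*cx + b*cy = e) (hc2 : c*cx + d*cy = f) :
    X = cx ∧ Y = cy := by
  have hx : (a*d - b*c) * (X - cx) = 0 := by
    linear_combination d*h1 - b*h2 - d*hc1 + b*hc2
  have hy : (a*d - b*c) * (Y - cy) = 0 := by
    linear_combination a*h2 - c*h1 + c*hc1 - a*hc2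
  constructor
  · have := (mul_eq_zero.mp hx).resolve_left hΔ
    linarith
  · have := (mul_eq_zero.mp hy).resolve_left hΔ
    linarith

set_option maxHeartbeats 2000000 in
theorem stmt_18 (A B C G P D E F D0 E0 F0 D3 E3 F3 P' Q : Pt)
    (A' B' C' Astar Bstar Cstar Qstar Gstar : Pt)
(hABC : AffineIndependent ℝ ![A, B, C])
    (hG : G = (1/3 : ℝ) • (A + B + C))
    (hPa : ¬ Collinear ℝ {B, C, P})
    (hPb : ¬ Collinear ℝ {C, A, P})
    (hPc : ¬ Collinear ℝ {A, B, P})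
    (hD : Collinear ℝ {B, C, D}) (hDcev : Collinear ℝ {A, P, D})
    (hE : Collinear ℝ {C, A, E}) (hEcev : Collinear ℝ {B, P, E})
    (hF : Collinear ℝ {A, B, F}) (hFcev : Collinear ℝ {C, P, F})
    (hD0 : D0 = midpoint ℝ B C) (hE0 : E0 = midpoint ℝ C A) (hF0 : F0 = midpoint ℝ A B)
(hD3 : D3 = Equiv.pointReflection D0 D)
    (hE3 : E3 = Equiv.pointReflection E0 E)
    (hF3 : F3 = Equiv.pointReflection F0 F)
(hP'a : Collinear ℝ {A, D3, P'})
    (hP'b : Collinear ℝ {B, E3, P'})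
    (hP'c : Collinear ℝ {C, F3, P'})
    (hQ : Q = AffineMap.homothety G (-1/2 : ℝ) P')
    (hDEF : AffineIndependent ℝ ![D, E, F])
    (hA'B : A' ≠ B) (hA'C : A' ≠ C)
    (hBA' : line[ℝ, B, A'] ∥ line[ℝ, D, F])
    (hCA' : line[ℝ, C, A'] ∥ line[ℝ, D, E])
    (hB'A : B' ≠ A) (hB'C : B' ≠ C)
    (hAB' : line[ℝ, A, B'] ∥ line[ℝ, E, F])
    (hCB' : line[ℝ, C, B'] ∥ line[ℝ, D, E])
    (hC'A : C' ≠ A) (hC'B : C' ≠ B)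
    (hAC' : line[ℝ, A, C'] ∥ line[ℝ, E, F])
    (hBC' : line[ℝ, B, C'] ∥ line[ℝ, D, F])
    (hA'B'C' : AffineIndependent ℝ ![A', B', C'])
    (hcevA : Collinear ℝ {A', Q, A}) (hcevB : Collinear ℝ {B', Q, B})
    (hcevC : Collinear ℝ {C', Q, C})
    (hAstar : Astar = Equiv.pointReflection (midpoint ℝ B' C') A)
    (hBstar : Bstar = Equiv.pointReflection (midpoint ℝ A' C') B)
    (hCstar : Cstar = Equiv.pointReflection (midpoint ℝ A' B') C)
    (hQsa : Collinear ℝ {A', Astar, Qstar})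
    (hQsb : Collinear ℝ {B', Bstar, Qstar})
    (hQsc : Collinear ℝ {C', Cstar, Qstar})
    (hGstar : Gstar = (1/3 : ℝ) • (A' + B' + C')) :
    AffineMap.homothety G (-1/2 : ℝ) P = AffineMap.homothety Gstar (-1/2 : ℝ) Qstar := by
  have hbc := my_bc_indep hABC
  have hA0 : A = (0:ℝ)•(B-A) + (0:ℝ)•(C-A) + A := by module
  have hB0 : B = (1:ℝ)•(B-A) + (0:ℝ)•(C-A) + A := by module
  have hC0 : C = (0:ℝ)•(B-A) + (1:ℝ)•(C-A) + A := by module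
  obtain ⟨p, q, hP0⟩ := my_exists_coords hbc A P
  obtain ⟨dx, dy, hDr⟩ := my_exists_coords hbc A D
  obtain ⟨ex, ey, hEr⟩ := my_exists_coords hbc A E
  obtain ⟨fx, fy, hFr⟩ := my_exists_coords hbc A F
  obtain ⟨a1x, a1y, hA'r⟩ := my_exists_coords hbc A A'
  obtain ⟨b1x, b1y, hB'r⟩ := my_exists_coords hbc A B'
  obtain ⟨c1x, c1y, hC'r⟩ := my_exists_coords hbc A C'
  obtain ⟨qsx, qsy, hQsr⟩ := my_exists_coords hbc A Qstar
  -- nondegeneracy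
  have hup : p ≠ 0 := fun h =>
    hPb ((my_collinear_iff_det hbc A hC0 hA0 hP0).mpr (by rw [h]; ring))
  have huq : q ≠ 0 := fun h =>
    hPc ((my_collinear_iff_det hbc A hA0 hB0 hP0).mpr (by rw [h]; ring))
  have huu : 1 - p - q ≠ 0 := fun h =>
    hPa ((my_collinear_iff_det hbc A hB0 hC0 hP0).mpr (by linear_combination h))
  -- cevian feet equations
  have eD1 := (my_collinear_iff_det hbc A hB0 hC0 hDr).mp hD
  have eD2 := (my_collinear_iff_det hbc A hA0 hP0 hDr).mp hDcev
  have eE1 := (my_collinear_iff_det hbc A hC0 hA0 hEr).mp hE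
  have eE2 := (my_collinear_iff_det hbc A hB0 hP0 hEr).mp hEcev
  have eF1 := (my_collinear_iff_det hbc A hA0 hB0 hFr).mp hF
  have eF2 := (my_collinear_iff_det hbc A hC0 hP0 hFr).mp hFcev
  have hpq : p + q ≠ 0 := by
    intro h
    apply hup
    linear_combination dx*h + eD2 + p*eD1
  have hdx : dx = p/(p+q) := by
    rw [eq_div_iff hpq]
    linear_combination (-p)*eD1 - eD2
  have hdy : dy = q/(p+q) := by
    rw [eq_div_iff hpq]
    linear_combination (-q)*eD1 + eD2
  have h1p : 1 - p ≠ 0 := by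
    intro h
    apply huq
    linear_combination ey*h + eE2 + q*eE1
  have hex : ex = 0 := by linear_combination eE1
  have hey : ey = q/(1-p) := by
    rw [eq_div_iff h1p]
    linear_combination -eE2 - q*eE1
  have h1q : 1 - q ≠ 0 := by
    intro h
    apply hup
    linear_combination -eF2 + p*eF1 + fx*h
  have hfx : fx = p/(1-q) := by
    rw [eq_div_iff h1q]
    linear_combination eF2 - p*eF1
  have hfy : fy = 0 := by linear_combination eF1
  -- parallel conditions
  have eA1 := my_para_det hbc A hB0 hA'r hDr hFr hBA'
  have eA2 := my_para_det hbc A hC0 hA'r hDr hEr hCA'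
  have eB1 := my_para_det hbc A hA0 hB'r hEr hFr hAB'
  have eB2 := my_para_det hbc A hC0 hB'r hDr hEr hCB'
  have eC1 := my_para_det hbc A hA0 hC'r hEr hFr hAC'
  have eC2 := my_para_det hbc A hB0 hC'r hDr hFr hBC'
  simp only [hdx, hdy, hex, hey, hfx, hfy] at eA1 eA2 eB1 eB2 eC1 eC2
  -- A'
  have EA1 : (q*(1-q))*a1x + (p*(p+2*q-1))*a1y = q*(1-q) := by
    linear_combination (norm := (field_simp; ring1)) (-((p+q)*(1-q))) * eA1
  have EA2 : (q*(2*p+q-1))*a1x + (p*(1-p))*a1y = p*(1-p) := by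
    linear_combination (norm := (field_simp; ring1)) ((1-p)*(p+q)) * eA2
  have hΔA : (q*(1-q))*(p*(1-p)) - (p*(p+2*q-1))*(q*(2*p+q-1)) ≠ 0 := by
    have : (q*(1-q))*(p*(1-p)) - (p*(p+2*q-1))*(q*(2*p+q-1))
        = 2*p*q*((1-p-q)*(p+q)) := by ring
    rw [this]
    exact mul_ne_zero (mul_ne_zero (mul_ne_zero two_ne_zero hup) huq)
      (mul_ne_zero huu hpq)
  have hcA1 : (q*(1-q))*((1-p)/(2*q)) + (p*(p+2*q-1))*((1-q)/(2*p)) = q*(1-q) := by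
    field_simp; ring
  have hcA2 : (q*(2*p+q-1))*((1-p)/(2*q)) + (p*(1-p))*((1-q)/(2*p)) = p*(1-p) := by
    field_simp; ring
  obtain ⟨ha1x, ha1y⟩ := my_solve2 EA1 EA2 hΔA hcA1 hcA2
  -- B'
  have EB1 : (q*(1-q))*b1x + (p*(1-p))*b1y = 0 := by
    linear_combination (norm := (field_simp; ring1)) (-((1-p)*(1-q))) * eB1
  have EB2 : (q*(2*p+q-1))*b1x + (p*(1-p))*b1y = p*(1-p) := by
    linear_combination (norm := (field_simp; ring1)) ((1-p)*(p+q)) * eB2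
  have hΔB : (q*(1-q))*(p*(1-p)) - (p*(1-p))*(q*(2*p+q-1)) ≠ 0 := by
    have : (q*(1-q))*(p*(1-p)) - (p*(1-p))*(q*(2*p+q-1))
        = 2*p*q*((1-p)*(1-p-q)) := by ring
    rw [this]
    exact mul_ne_zero (mul_ne_zero (mul_ne_zero two_ne_zero hup) huq)
      (mul_ne_zero h1p huu)
  have hcB1 : (q*(1-q))*(-(p*(1-p))/(2*q*(1-p-q))) + (p*(1-p))*((1-q)/(2*(1-p-q))) = 0 := by
    field_simp; ring
  have hcB2 : (q*(2*p+q-1))*(-(p*(1-p))/(2*q*(1-p-q))) + (p*(1-p))*((1-q)/(2*(1-p-q)))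
      = p*(1-p) := by
    field_simp; ring
  obtain ⟨hb1x, hb1y⟩ := my_solve2 EB1 EB2 hΔB hcB1 hcB2
  -- C'
  have EC1 : (q*(1-q))*c1x + (p*(1-p))*c1y = 0 := by
    linear_combination (norm := (field_simp; ring1)) (-((1-p)*(1-q))) * eC1
  have EC2 : (q*(1-q))*c1x + (p*(p+2*q-1))*c1y = q*(1-q) := by
    linear_combination (norm := (field_simp; ring1)) (-((p+q)*(1-q))) * eC2
  have hΔC : (q*(1-q))*(p*(p+2*q-1)) - (p*(1-p))*(q*(1-q)) ≠ 0 := by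
    have : (q*(1-q))*(p*(p+2*q-1)) - (p*(1-p))*(q*(1-q))
        = -(2*p*q*((1-q)*(1-p-q))) := by ring
    rw [this]
    exact neg_ne_zero.mpr (mul_ne_zero (mul_ne_zero (mul_ne_zero two_ne_zero hup) huq)
      (mul_ne_zero h1q huu))
  have hcC1 : (q*(1-q))*((1-p)/(2*(1-p-q))) + (p*(1-p))*(-(q*(1-q))/(2*p*(1-p-q))) = 0 := by
    field_simp; ring
  have hcC2 : (q*(1-q))*((1-p)/(2*(1-p-q))) + (p*(p+2*q-1))*(-(q*(1-q))/(2*p*(1-p-q)))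
      = q*(1-q) := by
    field_simp; ring
  obtain ⟨hc1x, hc1y⟩ := my_solve2 EC1 EC2 hΔC hcC1 hcC2
  -- reflections
  have hmid : ∀ x y : Pt, midpoint ℝ x y = (1/2 : ℝ)•(x+y) := fun x y => by
    rw [midpoint_eq_smul_add]
    norm_num
  have hAs : Astar = (b1x + c1x)•(B-A) + (b1y + c1y)•(C-A) + A := by
    rw [hAstar, Equiv.pointReflection_apply, hmid, hB'r, hC'r]
    simp only [vsub_eq_sub, vadd_eq_add]
    match_scalars <;> ring
  have hBs : Bstar = (a1x + c1x - 1)•(B-A) + (a1y + c1y)•(C-A) + A := by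
    rw [hBstar, Equiv.pointReflection_apply, hmid, hA'r, hC'r]
    simp only [vsub_eq_sub, vadd_eq_add]
    match_scalars <;> ring
  -- Qstar equations
  have eQ1 := (my_collinear_iff_det hbc A hA'r hAs hQsr).mp hQsa
  have eQ2 := (my_collinear_iff_det hbc A hB'r hBs hQsr).mp hQsb
  simp only [ha1x, ha1y, hb1x, hb1y, hc1x, hc1y] at eQ1 eQ2
  have EQ1 : (-(q*(1-q)*(2*p-1)))*qsx + (p*(1-p)*(2*q-1))*qsy = (1-p)*(1-q)*(q-p) := by
    linear_combination (norm := (field_simp; ring1)) (2*p*q*(1-p-q)) * eQ1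
  have EQ2 : (-(q*(1-q)*(2*(1-p-q)-1)))*qsx + (p*((1-p-q)+q-2*q*(1-p-q)))*qsy
      = p*(1-q)*(1-p-q) := by
    linear_combination (norm := (field_simp; ring1)) (2*p*q*(1-p-q)) * eQ2
  have hΔQ : (-(q*(1-q)*(2*p-1)))*(p*((1-p-q)+q-2*q*(1-p-q)))
      - (p*(1-p)*(2*q-1))*(-(q*(1-q)*(2*(1-p-q)-1))) ≠ 0 := by
    have : (-(q*(1-q)*(2*p-1)))*(p*((1-p-q)+q-2*q*(1-p-q)))
        - (p*(1-p)*(2*q-1))*(-(q*(1-q)*(2*(1-p-q)-1)))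
        = 2*p*(q*q)*((1-p-q)*(1-q)) := by ring
    rw [this]
    exact mul_ne_zero (mul_ne_zero (mul_ne_zero two_ne_zero hup) (mul_ne_zero huq huq))
      (mul_ne_zero huu h1q)
  have hcQ1 : (-(q*(1-q)*(2*p-1)))*((1-p)*((1-2*p)-2*q*(1-p-q))/(2*q*(1-p-q)))
      + (p*(1-p)*(2*q-1))*((1-q)*((1-2*q)-2*p*(1-p-q))/(2*p*(1-p-q)))
      = (1-p)*(1-q)*(q-p) := by
    field_simp; ring
  have hcQ2 : (-(q*(1-q)*(2*(1-p-q)-1)))*((1-p)*((1-2*p)-2*q*(1-p-q))/(2*q*(1-p-q)))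
      + (p*((1-p-q)+q-2*q*(1-p-q)))*((1-q)*((1-2*q)-2*p*(1-p-q))/(2*p*(1-p-q)))
      = p*(1-q)*(1-p-q) := by
    field_simp; ring
  obtain ⟨hqsx, hqsy⟩ := my_solve2 EQ1 EQ2 hΔQ hcQ1 hcQ2
  -- conclude
  have hfin1 : qsx = a1x + b1x + c1x - 1 + p := by
    rw [hqsx, ha1x, hb1x, hc1x]
    field_simp
    ring
  have hfin2 : qsy = a1y + b1y + c1y - 1 + q := by
    rw [hqsy, ha1y, hb1y, hc1y]
    field_simp
    ring
  have hGr : G = (1/3:ℝ)•(B-A) + (1/3:ℝ)•(C-A) + A := by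
    rw [hG]; module
  have hGsr : Gstar = ((a1x+b1x+c1x)/3)•(B-A) + ((a1y+b1y+c1y)/3)•(C-A) + A := by
    rw [hGstar, hA'r, hB'r, hC'r]; module
  rw [AffineMap.homothety_apply, AffineMap.homothety_apply]
  simp only [vsub_eq_sub, vadd_eq_add]
  rw [hGr, hGsr, hP0, hQsr]
  match_scalars
  · linear_combination (1/2) * hfin1
  · linear_combination (-1/2) * hfin1 + (-1/2) * hfin2
  · linear_combination (1/2) * hfin2
end

section
/- The lines AD3, BE3, CF3 are pairwise parallel (equivalently, P lies on the Steiner circumellipse of ABC, so that its isotomic conjugate is an infinite point) if and only if the composite affine map T ∘ T' equals the homothety with center G and ratio -2 (the inverse K⁻¹ of the complement map). -/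
open EuclideanGeometry Affine

local notation "Pt" => EuclideanSpace ℝ (Fin 2)

private lemma coll_of_comb {x y z : Pt} {t : ℝ} (h : z = t • (y - x) + x) :
    Collinear ℝ ({x, y, z} : Set Pt) := by
  rw [collinear_iff_of_mem (Set.mem_insert x {y, z})]
  refine ⟨y - x, fun w hw => ?_⟩
  simp only [Set.mem_insert_iff, Set.mem_singleton_iff] at hw
  rcases hw with rfl | rfl | rfl
  · exact ⟨0, by simp⟩
  · exact ⟨1, by simp⟩
  · exact ⟨t, by simpa using h⟩

private lemma comb_of_coll {x y z : Pt} (hxy : x ≠ y)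
    (h : Collinear ℝ ({x, y, z} : Set Pt)) : ∃ t : ℝ, z = t • (y - x) + x := by
  have hz : z ∈ line[ℝ, x, y] :=
    h.mem_affineSpan_of_mem_of_ne (Set.mem_insert _ _) (by simp) (by simp) hxy
  have hz' : (z - x) +ᵥ x ∈ line[ℝ, x, y] := by simpa using hz
  obtain ⟨r, hr⟩ := vadd_left_mem_affineSpan_pair.mp hz'
  have hr' : r • (y - x) = z - x := hr
  exact ⟨r, by linear_combination (norm := module) -hr'⟩

private lemma smul_cancel {b : ℝ} (hb : b ≠ 0) {w z : Pt} (h : b • z = w) :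
    z = b⁻¹ • w := by rw [← h, inv_smul_smul₀ hb]

private lemma coll_of_comb2 {x y z : Pt} {a b : ℝ} (hb : b ≠ 0)
    (h : a • (y - x) + b • (z - x) = 0) : Collinear ℝ ({x, y, z} : Set Pt) := by
  have h1 : b • (z - x) = -(a • (y - x)) := by linear_combination (norm := module) h
  have h2 : z - x = b⁻¹ • -(a • (y - x)) := smul_cancel hb h1
  exact coll_of_comb (t := -(b⁻¹ * a)) (by linear_combination (norm := module) h2)

private lemma par_iff {a b c d : Pt} (h1 : b - a ≠ 0) (h2 : d - c ≠ 0) :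
    line[ℝ, a, b] ∥ line[ℝ, c, d] ↔ ∃ r : ℝ, d - c = r • (b - a) := by
  rw [AffineSubspace.affineSpan_pair_parallel_iff_vectorSpan_eq, vectorSpan_pair,
    vectorSpan_pair]
  constructor
  · intro h
    have hm : (c - d) ∈ (ℝ ∙ (a - b) : Submodule ℝ Pt) := by
      rw [show (ℝ ∙ (a - b) : Submodule ℝ Pt) = ℝ ∙ (c - d) from h]
      exact Submodule.mem_span_singleton_self _
    obtain ⟨r, hr⟩ := Submodule.mem_span_singleton.mp hm
    exact ⟨r, by linear_combination (norm := module) hr⟩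
  · rintro ⟨r, hr⟩
    have hr0 : r ≠ 0 := by
      rintro rfl
      rw [zero_smul] at hr
      exact h2 hr
    have h3 : c - d = r • (a - b) := by linear_combination (norm := module) -hr
    rw [show (c -ᵥ d : Pt) = r • (a -ᵥ b) from h3,
      Submodule.span_singleton_smul_eq (isUnit_iff_ne_zero.mpr hr0)]

private lemma affmap_key (h : Pt →ᵃ[ℝ] Pt) (X Y : Pt) :
    h.linear (X - Y) = h X - h Y := by
  have h1 := h.map_vadd Y (X - Y)
  have h2 : (X - Y) +ᵥ Y = X := by
    simp [vadd_eq_add, sub_add_cancel]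
  rw [h2] at h1
  rw [h1]
  simp [vadd_eq_add]

private lemma affmap_ext {f g : Pt →ᵃ[ℝ] Pt} {A B C : Pt}
    (hspan : Submodule.span ℝ ({B - A, C - A} : Set Pt) = ⊤)
    (hA : f A = g A) (hB : f B = g B) (hC : f C = g C) : f = g := by
  have hlin : f.linear = g.linear := by
    apply LinearMap.ext_on hspan
    rintro x hx
    rcases hx with rfl | rfl
    · rw [affmap_key, affmap_key, hA, hB]
    · rw [affmap_key, affmap_key, hA, hC]
  refine AffineMap.ext fun x => ?_
  have h1 := affmap_key f x A
  have h2 := affmap_key g x A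
  have h3 : f x = f.linear (x - A) + f A := by rw [h1]; abel
  rw [h3, hlin, hA, h2]
  abel

set_option maxHeartbeats 1000000 in
theorem stmt_19 (A B C G P D E F D0 E0 F0 D3 E3 F3 : Pt) (T T' : Pt →ᵃ[ℝ] Pt)
(hABC : AffineIndependent ℝ ![A, B, C])
    (hG : G = (1/3 : ℝ) • (A + B + C))
    (hPa : ¬ Collinear ℝ {B, C, P})
    (hPb : ¬ Collinear ℝ {C, A, P})
    (hPc : ¬ Collinear ℝ {A, B, P})
    (hD : Collinear ℝ {B, C, D}) (hDcev : Collinear ℝ {A, P, D})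
    (hE : Collinear ℝ {C, A, E}) (hEcev : Collinear ℝ {B, P, E})
    (hF : Collinear ℝ {A, B, F}) (hFcev : Collinear ℝ {C, P, F})
    (hD0 : D0 = midpoint ℝ B C) (hE0 : E0 = midpoint ℝ C A) (hF0 : F0 = midpoint ℝ A B)
(hD3 : D3 = Equiv.pointReflection D0 D)
    (hE3 : E3 = Equiv.pointReflection E0 E)
    (hF3 : F3 = Equiv.pointReflection F0 F)
    (hPA : P ≠ A) (hPB : P ≠ B) (hPC : P ≠ C)
    (hTA : T A = D) (hTB : T B = E) (hTC : T C = F)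
    (hT'A : T' A = D3) (hT'B : T' B = E3) (hT'C : T' C = F3) :
    (line[ℝ, A, D3] ∥ line[ℝ, B, E3] ∧ line[ℝ, B, E3] ∥ line[ℝ, C, F3] ∧
        line[ℝ, A, D3] ∥ line[ℝ, C, F3]) ↔
      T.comp T' = AffineMap.homothety G (-2 : ℝ) := by
  -- basic nondegeneracies
  have hncol : ¬Collinear ℝ ({A, B, C} : Set Pt) :=
    affineIndependent_iff_not_collinear_set.mp hABC
  have hA_B : A ≠ B := by rintro rfl; exact hncol (by simpa using collinear_pair ℝ A C)
  have hB_C : B ≠ C := by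
    rintro rfl
    exact hncol (by simpa [Set.insert_comm] using collinear_pair ℝ A B)
  have hC_A : C ≠ A := by rintro rfl; exact hncol (by simpa [Set.insert_comm] using collinear_pair ℝ B C)
  -- set up coordinates
  obtain ⟨u, hu⟩ : ∃ u : Pt, u = B - A := ⟨_, rfl⟩
  obtain ⟨v, hv⟩ : ∃ v : Pt, v = C - A := ⟨_, rfl⟩
  have hB' : B = A + u := by rw [hu]; abel
  have hC' : C = A + v := by rw [hv]; abel
  have hu0 : u ≠ 0 := by rw [hu]; exact sub_ne_zero_of_ne hA_B.symm
  have hli : LinearIndependent ℝ ![u, v] := by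
    rw [LinearIndependent.pair_iff]
    intro s t hst
    have ht : t = 0 := by
      by_contra ht
      exact hncol (coll_of_comb2 ht (by rw [← hu, ← hv]; exact hst))
    subst ht
    have hs0 : s • u = 0 := by linear_combination (norm := module) hst
    refine ⟨?_, rfl⟩
    rcases smul_eq_zero.mp hs0 with h | h
    · exact h
    · exact absurd h hu0
  have hpair : ∀ a b : ℝ, a • u + b • v = 0 → a = 0 ∧ b = 0 :=
    LinearIndependent.pair_iff.mp hli
  have hrange : Set.range ![u, v] = ({u, v} : Set Pt) := by
    simp only [Matrix.range_cons, Matrix.range_empty, Set.singleton_union, LawfulSingleton.insert_empty_eq]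
  have hspan : Submodule.span ℝ ({u, v} : Set Pt) = ⊤ := by
    rw [← hrange]
    exact hli.span_eq_top_of_card_eq_finrank (by simp)
  have hmem : P - A ∈ Submodule.span ℝ ({u, v} : Set Pt) := by rw [hspan]; trivial
  obtain ⟨p, q, hPc0⟩ := Submodule.mem_span_pair.mp hmem
  have hP' : P = A + p • u + q • v := by linear_combination (norm := module) -hPc0
  -- p ≠ 0, q ≠ 0
  have hq : q ≠ 0 := by
    intro h0
    apply hPc
    have hP2 := hP'
    rw [h0] at hP2
    exact coll_of_comb (t := p) (by rw [← hu]; linear_combination (norm := module) hP2)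
  have hp : p ≠ 0 := by
    intro h0
    apply hPb
    have hP2 := hP'
    rw [h0] at hP2
    refine coll_of_comb (t := 1 - q) ?_
    rw [hC']
    linear_combination (norm := module) hP2
  -- cevian point D
  obtain ⟨t₁, hDt⟩ := comb_of_coll hB_C hD
  obtain ⟨s₁, hDs⟩ := comb_of_coll hPA.symm hDcev
  have hcombD : t₁ • (C - B) + B = s₁ • (P - A) + A := hDt.symm.trans hDs
  rw [hB', hC', hP'] at hcombD
  have h1 : (s₁ * p - (1 - t₁)) • u + (s₁ * q - t₁) • v = 0 := by
    linear_combination (norm := module) -hcombD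
  obtain ⟨e1, e2⟩ := hpair _ _ h1
  have hpq : p + q ≠ 0 := by
    intro h0
    have : (1 : ℝ) = 0 := by linear_combination -e1 - e2 + s₁ * h0
    exact one_ne_zero this
  have ht₁pq : t₁ * (p + q) = q := by linear_combination q * e1 - p * e2
  have ht₁ : t₁ = q / (p + q) := by field_simp; linear_combination ht₁pq
  have hDc : D = A + (p / (p + q)) • u + (q / (p + q)) • v := by
    rw [hDt, hB', hC', ht₁]
    match_scalars <;> field_simp <;> ring
  -- cevian point E
  obtain ⟨t₂, hEt⟩ := comb_of_coll hC_A hE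
  obtain ⟨s₂, hEs⟩ := comb_of_coll hPB.symm hEcev
  have hcombE : t₂ • (A - C) + C = s₂ • (P - B) + B := hEt.symm.trans hEs
  rw [hB', hC', hP'] at hcombE
  have h2 : (s₂ * (p - 1) + 1) • u + (s₂ * q - (1 - t₂)) • v = 0 := by
    linear_combination (norm := module) -hcombE
  obtain ⟨e3, e4⟩ := hpair _ _ h2
  have h1p : (1 : ℝ) - p ≠ 0 := by
    intro h0
    have : (1 : ℝ) = 0 := by linear_combination e3 + s₂ * h0
    exact one_ne_zero this
  have ht₂pq : t₂ * (1 - p) = 1 - p - q := by linear_combination (1 - p) * e4 + q * e3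
  have ht₂ : t₂ = (1 - p - q) / (1 - p) := by field_simp; linear_combination ht₂pq
  have hEc : E = A + (q / (1 - p)) • v := by
    rw [hEt, hC', ht₂]
    match_scalars <;> field_simp <;> ring
  -- cevian point F
  obtain ⟨t₃, hFt⟩ := comb_of_coll hA_B hF
  obtain ⟨s₃, hFs⟩ := comb_of_coll hPC.symm hFcev
  have hcombF : t₃ • (B - A) + A = s₃ • (P - C) + C := hFt.symm.trans hFs
  rw [hB', hC', hP'] at hcombF
  have h3 : (t₃ - s₃ * p) • u + (-1 - s₃ * (q - 1)) • v = 0 := by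
    linear_combination (norm := module) hcombF
  obtain ⟨e5, e6⟩ := hpair _ _ h3
  have h1q : (1 : ℝ) - q ≠ 0 := by
    intro h0
    have : (1 : ℝ) = 0 := by linear_combination -e6 + s₃ * h0
    exact one_ne_zero this
  have ht₃pq : t₃ * (1 - q) = p := by linear_combination (1 - q) * e5 + p * e6
  have ht₃ : t₃ = p / (1 - q) := by field_simp; linear_combination ht₃pq
  have hFc : F = A + (p / (1 - q)) • u := by
    rw [hFt, hB', ht₃]
    match_scalars <;> field_simp <;> ring
  -- reflected points
  have hD3c : D3 = A + (q / (p + q)) • u + (p / (p + q)) • v := by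
    rw [hD3, hD0, Equiv.pointReflection_apply, midpoint_eq_smul_add, invOf_eq_inv]
    simp only [vsub_eq_sub, vadd_eq_add]
    rw [hDc, hB', hC']
    match_scalars <;> field_simp <;> ring
  have hE3c : E3 = A + ((1 - p - q) / (1 - p)) • v := by
    rw [hE3, hE0, Equiv.pointReflection_apply, midpoint_eq_smul_add, invOf_eq_inv]
    simp only [vsub_eq_sub, vadd_eq_add]
    rw [hEc, hC']
    match_scalars <;> field_simp <;> ring
  have hF3c : F3 = A + ((1 - p - q) / (1 - q)) • u := by
    rw [hF3, hF0, Equiv.pointReflection_apply, midpoint_eq_smul_add, invOf_eq_inv]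
    simp only [vsub_eq_sub, vadd_eq_add]
    rw [hFc, hB']
    match_scalars <;> field_simp <;> ring
  -- nonzero directions
  have hnD3A : D3 - A ≠ 0 := by
    intro h0
    have h4 : (q / (p + q)) • u + (p / (p + q)) • v = 0 := by
      linear_combination (norm := module) h0 - hD3c
    have := (hpair _ _ h4).1
    rw [div_eq_zero_iff] at this
    rcases this with h | h
    · exact hq h
    · exact hpq h
  have hnE3B : E3 - B ≠ 0 := by
    intro h0
    have h4 : (-1 : ℝ) • u + ((1 - p - q) / (1 - p)) • v = 0 := by
      linear_combination (norm := module) h0 - hE3c + hB'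
    have := (hpair _ _ h4).1
    norm_num at this
  have hnF3C : F3 - C ≠ 0 := by
    intro h0
    have h4 : ((1 - p - q) / (1 - q)) • u + (-1 : ℝ) • v = 0 := by
      linear_combination (norm := module) h0 - hF3c + hC'
    have := (hpair _ _ h4).2
    norm_num at this
  -- the key quantity
  have key1 : line[ℝ, A, D3] ∥ line[ℝ, B, E3] → p + q - p^2 - q^2 - p*q = 0 := by
    intro hpar
    obtain ⟨r, hr⟩ := (par_iff hnD3A hnE3B).mp hpar
    rw [hE3c, hB', hD3c] at hr
    have h4 : (-1 - r * (q / (p + q))) • u +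
        ((1 - p - q) / (1 - p) - r * (p / (p + q))) • v = 0 := by
      linear_combination (norm := module) hr
    obtain ⟨e_u, e_v⟩ := hpair _ _ h4
    have h5 : (p + q - p^2 - q^2 - p*q) * (p + q) = 0 := by
      field_simp at e_u e_v
      linear_combination q * e_v - p * (1 - p) * e_u
    rcases mul_eq_zero.mp h5 with h | h
    · exact h
    · exact absurd h hpq
  have key2 : p + q - p^2 - q^2 - p*q = 0 →
      (line[ℝ, A, D3] ∥ line[ℝ, B, E3] ∧ line[ℝ, B, E3] ∥ line[ℝ, C, F3] ∧
        line[ℝ, A, D3] ∥ line[ℝ, C, F3]) := by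
    intro hs
    refine ⟨(par_iff hnD3A hnE3B).mpr ⟨-(p + q)/q, ?_⟩,
      (par_iff hnE3B hnF3C).mpr ⟨-(1 - p - q)/(1 - q), ?_⟩,
      (par_iff hnD3A hnF3C).mpr ⟨-(p + q)/p, ?_⟩⟩
    · rw [hE3c, hB', hD3c]
      match_scalars
      · ring
      · field_simp
        linear_combination hs
      · field_simp
    · rw [hF3c, hC', hE3c, hB']
      match_scalars
      · ring
      · ring
      · field_simp
        linear_combination -hs
    · rw [hF3c, hC', hD3c]
      match_scalars
      · ring
      · field_simp
        linear_combination hs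
      · field_simp
  -- lineMap forms
  have hD3L : D3 = AffineMap.lineMap B C (p / (p + q)) := by
    rw [AffineMap.lineMap_apply]
    simp only [vsub_eq_sub, vadd_eq_add]
    rw [hD3c, hB', hC']
    match_scalars <;> field_simp <;> ring
  have hE3L : E3 = AffineMap.lineMap A C ((1 - p - q) / (1 - p)) := by
    rw [AffineMap.lineMap_apply]
    simp only [vsub_eq_sub, vadd_eq_add]
    rw [hE3c, hC']
    match_scalars <;> field_simp <;> ring
  have hF3L : F3 = AffineMap.lineMap A B ((1 - p - q) / (1 - q)) := by
    rw [AffineMap.lineMap_apply]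
    simp only [vsub_eq_sub, vadd_eq_add]
    rw [hF3c, hB']
    match_scalars <;> field_simp <;> ring
  have key3 : p + q - p^2 - q^2 - p*q = 0 →
      T.comp T' = AffineMap.homothety G (-2 : ℝ) := by
    intro hs
    refine affmap_ext (A := A) (B := B) (C := C) ?_ ?_ ?_ ?_
    · rw [← hu, ← hv]; exact hspan
    · rw [AffineMap.comp_apply, hT'A, hD3L, AffineMap.apply_lineMap, hTB, hTC,
        AffineMap.lineMap_apply, AffineMap.homothety_apply]
      simp only [vsub_eq_sub, vadd_eq_add]
      rw [hEc, hFc, hG, hB', hC']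
      match_scalars
      · ring
      · field_simp
        linear_combination (-3 : ℝ) * hs
      · field_simp
        linear_combination (-3 : ℝ) * hs
    · rw [AffineMap.comp_apply, hT'B, hE3L, AffineMap.apply_lineMap, hTA, hTC,
        AffineMap.lineMap_apply, AffineMap.homothety_apply]
      simp only [vsub_eq_sub, vadd_eq_add]
      rw [hDc, hFc, hG, hB', hC']
      match_scalars
      · ring
      · field_simp
        linear_combination 3*(1 + p) * hs
      · field_simp
        linear_combination (-3 : ℝ) * hs
    · rw [AffineMap.comp_apply, hT'C, hF3L, AffineMap.apply_lineMap, hTA, hTB,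
        AffineMap.lineMap_apply, AffineMap.homothety_apply]
      simp only [vsub_eq_sub, vadd_eq_add]
      rw [hDc, hEc, hG, hB', hC']
      match_scalars
      · ring
      · field_simp
        linear_combination 3*(1 + q) * hs
      · field_simp
        linear_combination (-3 : ℝ) * hs
  have key4 : T.comp T' = AffineMap.homothety G (-2 : ℝ) →
      p + q - p^2 - q^2 - p*q = 0 := by
    intro heq
    have hBeq := DFunLike.congr_fun heq B
    rw [AffineMap.comp_apply, hT'B, hE3L, AffineMap.apply_lineMap, hTA, hTC,
      AffineMap.lineMap_apply, AffineMap.homothety_apply] at hBeq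
    simp only [vsub_eq_sub, vadd_eq_add] at hBeq
    rw [hDc, hFc, hG, hB', hC'] at hBeq
    have h4 : ((1 - (1 - p - q)/(1 - p)) * (p/(p + q)) +
          ((1 - p - q)/(1 - p)) * (p/(1 - q)) + 1) • u +
        ((1 - (1 - p - q)/(1 - p)) * (q/(p + q)) - 1) • v = 0 := by
      linear_combination (norm := module) hBeq
    have e_v := (hpair _ _ h4).2
    field_simp at e_v
    linear_combination -e_v
  constructor
  · intro h
    exact key3 (key1 h.1)
  · intro h
    exact key2 (key4 h)
end
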